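/- arXiv:1705.09684 — 2 statements merged into one kernel-verified Lean document; each statement's English description precedes it below -/
import Mathlib

section
/- Let {D_{S_i}}_{i=1}^k be k source distributions with true labeling functions f_{S_i}, and D_T the target distribution with labeling function f_T, all over X, and let H be a hypothesis class of binary classifiers. Let h* ∈ H achieve the minimum of ε_T(h) + max_{i∈[k]} ε_{S_i}(h) over h ∈ H, and set λ := ε_T(h*) + max_{i∈[k]} ε_{S_i}(h*). Then for every h ∈ H: ε_T(h) ≤ max_{i∈[k]} ε_{S_i}(h) + λ + (1/2)·d_{HΔH}(D_T; {D_{S_i}}_{i=1}^k). -/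
open MeasureTheory Real Filter
open scoped ENNReal NNReal

noncomputable section

variable {X : Type*}

/-- Error of `g` w.r.t. `g'` under distribution `D`: `E_{x ~ D} |g x - g' x|`. -/
def errE [MeasurableSpace X] (D : Measure X) (g g' : X → ℝ) : ℝ :=
  ∫ x, |g x - g' x| ∂D

/-- A binary hypothesis takes values in `{0, 1}`. -/
def IsBinary (h : X → ℝ) : Prop := ∀ x, h x = 0 ∨ h x = 1

/-- The collection `A_H` of supports of hypotheses in a class `H`. -/
def supports (H : Set (X → ℝ)) : Set (Set X) := {A | ∃ h ∈ H, A = {x | h x = 1}}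

/-- `H`-divergence between two distributions:
`d_H(D, D') = 2 sup_{A ∈ A_H} |Pr_D(A) - Pr_{D'}(A)|`. -/
def dHdiv [MeasurableSpace X] (H : Set (X → ℝ)) (D D' : Measure X) : ℝ :=
  2 * sSup {r | ∃ h ∈ H, r = |(D {x | h x = 1}).toReal - (D' {x | h x = 1}).toReal|}

/-- Symmetric difference hypothesis class `H Δ H`
(`h ⊕ h'` is `|h - h'|` for `{0,1}`-valued functions). -/
def symmDiffClass (H : Set (X → ℝ)) : Set (X → ℝ) :=
  {g | ∃ h ∈ H, ∃ h' ∈ H, g = fun x => |h x - h' x|}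

/-- Multi-source divergence: `d_H(D_T; {D_{S_i}}) = max_i d_H(D_T, D_{S_i})`. -/
def dHmulti [MeasurableSpace X] (H : Set (X → ℝ)) (DT : Measure X) {k : ℕ}
    (DS : Fin k → Measure X) : ℝ :=
  ⨆ i : Fin k, dHdiv H DT (DS i)

/-- A set family `C` shatters a finite set `s`. -/
def ShattersSet (C : Set (Set X)) (s : Finset X) : Prop :=
  ∀ t : Set X, t ⊆ (s : Set X) → ∃ A ∈ C, (s : Set X) ∩ A = t

/-- The VC dimension of a set family `C` equals `d`. -/
def VCDimEq (C : Set (Set X)) (d : ℕ) : Prop :=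
  (∃ s : Finset X, s.card = d ∧ ShattersSet C s) ∧
  ∀ s : Finset X, ShattersSet C s → s.card ≤ d

/-- Empirical (uniform) measure of a sample of size `m`. -/
def empMeasure [MeasurableSpace X] {m : ℕ} (xs : Fin m → X) : Measure X :=
  (m : ℝ≥0∞)⁻¹ • ∑ i, Measure.dirac (xs i)

/-- Empirical risk of `h` w.r.t. labeling `f` over the sample `xs`. -/
def empRisk {m : ℕ} (xs : Fin m → X) (h f : X → ℝ) : ℝ :=
  (∑ i, |h (xs i) - f (xs i)|) / m

lemma binary_mem_Icc {h : X → ℝ} (hb : IsBinary h) (x : X) : h x ∈ Set.Icc (0:ℝ) 1 := by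
  rcases hb x with h0 | h0 <;> rw [h0] <;> constructor <;> norm_num

lemma abs_diff_le_two {g g' : X → ℝ} (hg : ∀ x, g x ∈ Set.Icc (0:ℝ) 1)
    (hg' : ∀ x, g' x ∈ Set.Icc (0:ℝ) 1) : ∀ x, |g x - g' x| ≤ 2 := by
  intro x
  obtain ⟨a0, a1⟩ := hg x
  obtain ⟨b0, b1⟩ := hg' x
  rw [abs_le]; constructor <;> linarith

lemma errE_integrable [MeasurableSpace X] (D : Measure X) [IsProbabilityMeasure D]
    {g g' : X → ℝ} (hg : Measurable g) (hg' : Measurable g')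
    (hb : ∀ x, |g x - g' x| ≤ 2) :
    Integrable (fun x => |g x - g' x|) D := by
  refine Integrable.mono' (integrable_const 2) (hg.sub hg').abs.aestronglyMeasurable ?_
  filter_upwards with x
  simpa [Real.norm_eq_abs, abs_abs] using hb x

lemma errE_triangle [MeasurableSpace X] (D : Measure X) [IsProbabilityMeasure D]
    {a b c : X → ℝ} (ha : Measurable a) (hb : Measurable b) (hc : Measurable c)
    (hab : ∀ x, |a x - b x| ≤ 2) (hbc : ∀ x, |b x - c x| ≤ 2) :
    errE D a c ≤ errE D a b + errE D b c := by
  have h1 := errE_integrable D ha hb hab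
  have h2 := errE_integrable D hb hc hbc
  unfold errE
  rw [← integral_add h1 h2]
  refine integral_mono_of_nonneg (Filter.Eventually.of_forall fun x => abs_nonneg _)
    (h1.add h2) ?_
  filter_upwards with x
  simpa using abs_sub_le (a x) (b x) (c x)

lemma errE_comm [MeasurableSpace X] (D : Measure X) (g g' : X → ℝ) :
    errE D g g' = errE D g' g := by
  unfold errE; simp_rw [abs_sub_comm]

lemma errE_binary [MeasurableSpace X] (D : Measure X) {h h' : X → ℝ}
    (hb : IsBinary h) (hb' : IsBinary h') (hm : Measurable h) (hm' : Measurable h') :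
    errE D h h' = (D {x | |h x - h' x| = 1}).toReal := by
  have hset : MeasurableSet {x | |h x - h' x| = 1} :=
    (hm.sub hm').abs (measurableSet_singleton 1)
  have key : (fun x => |h x - h' x|)
      = Set.indicator {x | |h x - h' x| = 1} (fun _ => (1:ℝ)) := by
    funext x
    by_cases hx : |h x - h' x| = 1
    · simp [Set.indicator, hx]
    · have h0 : |h x - h' x| = 0 := by
        rcases hb x with h1 | h1 <;> rcases hb' x with h2 | h2 <;>
          rw [h1, h2] at hx ⊢ <;> norm_num at *
      rw [h0]
      simp [Set.indicator, hx]
  unfold errE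
  rw [key, MeasureTheory.integral_indicator_const (1:ℝ) hset, smul_eq_mul, mul_one]
  rfl

lemma err_diff_le [MeasurableSpace X] (DT D : Measure X)
    [IsProbabilityMeasure DT] [IsProbabilityMeasure D]
    (H : Set (X → ℝ)) (hbin : ∀ h ∈ H, IsBinary h) (hmeas : ∀ h ∈ H, Measurable h)
    {h h' : X → ℝ} (hh : h ∈ H) (hh' : h' ∈ H) :
    errE DT h h' ≤ errE D h h' + (1 / 2) * dHdiv (symmDiffClass H) DT D := by
  set S : Set ℝ :=
    {r | ∃ g ∈ symmDiffClass H, r = |(DT {x | g x = 1}).toReal - (D {x | g x = 1}).toReal|}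
  have hbdd : BddAbove S := by
    refine ⟨1, fun r hr => ?_⟩
    obtain ⟨g, _, rfl⟩ := hr
    have h1 : (DT {x | g x = 1}).toReal ≤ 1 :=
      ENNReal.toReal_mono ENNReal.one_ne_top prob_le_one
    have h2 : (D {x | g x = 1}).toReal ≤ 1 :=
      ENNReal.toReal_mono ENNReal.one_ne_top prob_le_one
    have h3 : (0:ℝ) ≤ (DT {x | g x = 1}).toReal := ENNReal.toReal_nonneg
    have h4 : (0:ℝ) ≤ (D {x | g x = 1}).toReal := ENNReal.toReal_nonneg
    rw [abs_le]; constructor <;> linarith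
  have hmemS : |(DT {x | |h x - h' x| = 1}).toReal - (D {x | |h x - h' x| = 1}).toReal| ∈ S :=
    ⟨fun x => |h x - h' x|, ⟨h, hh, h', hh', rfl⟩, rfl⟩
  have hle : |(DT {x | |h x - h' x| = 1}).toReal - (D {x | |h x - h' x| = 1}).toReal|
      ≤ sSup S := le_csSup hbdd hmemS
  have e1 := errE_binary DT (hbin h hh) (hbin h' hh') (hmeas h hh) (hmeas h' hh')
  have e2 := errE_binary D (hbin h hh) (hbin h' hh') (hmeas h hh) (hmeas h' hh')
  have hd : dHdiv (symmDiffClass H) DT D = 2 * sSup S := rfl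
  have habs := abs_sub_abs_le_abs_sub (DT {x | |h x - h' x| = 1}).toReal
    (D {x | |h x - h' x| = 1}).toReal
  rw [e1, e2, hd]
  have := le_abs_self ((DT {x | |h x - h' x| = 1}).toReal
    - (D {x | |h x - h' x| = 1}).toReal)
  linarith

/-- Population multi-source generalization bound (Theorem 2 of the paper):
`ε_T(h) ≤ max_i ε_{S_i}(h) + λ + (1/2) d_{HΔH}(D_T; {D_{S_i}})`. -/
theorem multi_source_population_bound [MeasurableSpace X] {k : ℕ} (hk : 0 < k)
    (DS : Fin k → Measure X) (DT : Measure X)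
    [∀ i, IsProbabilityMeasure (DS i)] [IsProbabilityMeasure DT]
    (fS : Fin k → X → ℝ) (fT : X → ℝ)
    (hfS : ∀ i, Measurable (fS i)) (hfT : Measurable fT)
    (hfSb : ∀ i x, fS i x ∈ Set.Icc (0:ℝ) 1) (hfTb : ∀ x, fT x ∈ Set.Icc (0:ℝ) 1)
    (H : Set (X → ℝ)) (hbin : ∀ h ∈ H, IsBinary h) (hmeas : ∀ h ∈ H, Measurable h)
    (hstar : X → ℝ) (hstarH : hstar ∈ H)
    (hstarOpt : ∀ h ∈ H,
      errE DT hstar fT + ⨆ i, errE (DS i) hstar (fS i)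
        ≤ errE DT h fT + ⨆ i, errE (DS i) h (fS i))
    (lam : ℝ) (hlam : lam = errE DT hstar fT + ⨆ i, errE (DS i) hstar (fS i))
    (h : X → ℝ) (hh : h ∈ H) :
    errE DT h fT ≤ (⨆ i, errE (DS i) h (fS i)) + lam
      + (1 / 2) * dHmulti (symmDiffClass H) DT DS := by
  set i0 : Fin k := ⟨0, hk⟩
  have hbh := hbin h hh
  have hbstar := hbin hstar hstarH
  have hmh := hmeas h hh
  have hmstar := hmeas hstar hstarH
  have hIh := binary_mem_Icc hbh
  have hIstar := binary_mem_Icc hbstar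
  -- triangle on target
  have t1 : errE DT h fT ≤ errE DT h hstar + errE DT hstar fT :=
    errE_triangle DT hmh hmstar hfT (abs_diff_le_two hIh hIstar)
      (abs_diff_le_two hIstar hfTb)
  -- divergence transfer
  have t2 : errE DT h hstar ≤ errE (DS i0) h hstar
      + (1 / 2) * dHdiv (symmDiffClass H) DT (DS i0) :=
    err_diff_le DT (DS i0) H hbin hmeas hh hstarH
  -- triangle on source
  have t3 : errE (DS i0) h hstar
      ≤ errE (DS i0) h (fS i0) + errE (DS i0) (fS i0) hstar :=
    errE_triangle (DS i0) hmh (hfS i0) hmstar (abs_diff_le_two hIh (hfSb i0))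
      (abs_diff_le_two (hfSb i0) hIstar)
  have t3' : errE (DS i0) (fS i0) hstar = errE (DS i0) hstar (fS i0) :=
    errE_comm (DS i0) (fS i0) hstar
  -- pass to suprema
  have t4 : errE (DS i0) h (fS i0) ≤ ⨆ i, errE (DS i) h (fS i) :=
    le_ciSup (f := fun i => errE (DS i) h (fS i)) (Set.finite_range _).bddAbove i0
  have t5 : errE (DS i0) hstar (fS i0) ≤ ⨆ i, errE (DS i) hstar (fS i) :=
    le_ciSup (f := fun i => errE (DS i) hstar (fS i)) (Set.finite_range _).bddAbove i0
  have t6 : dHdiv (symmDiffClass H) DT (DS i0) ≤ dHmulti (symmDiffClass H) DT DS :=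
    le_ciSup (f := fun i => dHdiv (symmDiffClass H) DT (DS i)) (Set.finite_range _).bddAbove i0
  rw [hlam]
  linarith
end
end

section
/- Let ⟨D_S, f_S⟩ and ⟨D_T, f_T⟩ be a source and a target domain over X, and let H be a hypothesis class of binary classifiers with VC-dimension d. Let U_S and U_T be unlabeled i.i.d. samples of size m each drawn from D_S and D_T, and let d̂_{HΔH}(U_S, U_T) denote the HΔH-divergence between the empirical distributions of U_S and U_T. Let h* ∈ H minimize ε_S(h) + ε_T(h) and set λ := ε_S(h*) + ε_T(h*). Then with probability at least 1 − δ over the choice of the samples, for every h ∈ H: ε_T(h) ≤ ε_S(h) + (1/2)·d̂_{HΔH}(U_S, U_T) + 4·√((2d·log(2m) + log(4/δ))/m) + λ. -/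
open MeasureTheory Real Filter
open scoped ENNReal NNReal

noncomputable section

variable {X : Type*}

section AuxConc
open ProbabilityTheory
variable {α : Type*} [MeasurableSpace α]



lemma aux_exp_le {u : ℝ} (h : |u| ≤ 1) : Real.exp u ≤ 1 + u + (3/4) * u^2 := by
  have := Real.exp_bound h (n := 2) (by norm_num)
  have h2 : ∑ m ∈ Finset.range 2, u ^ m / m.factorial = 1 + u := by
    simp [Finset.sum_range_succ]
  rw [h2] at this
  have h3 : |u| ^ 2 = u ^ 2 := sq_abs u
  have := (abs_sub_le_iff.1 this).1
  rw [h3] at this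
  norm_num at this ⊢
  nlinarith

lemma aux_integrable_of_bound (μ : Measure α) [IsFiniteMeasure μ] {g : α → ℝ}
    (hg : Measurable g) (C : ℝ) (h : ∀ x, |g x| ≤ C) : Integrable g μ := by
  refine Integrable.mono' (integrable_const C) hg.aestronglyMeasurable
    (Filter.Eventually.of_forall fun x => by simpa using h x)

lemma aux_mgf_single (μ : Measure α) [IsProbabilityMeasure μ] {ψ : α → ℝ}
    (hψ : Measurable ψ) (hb : ∀ x, |ψ x| ≤ 1) (h0 : ∫ x, ψ x ∂μ = 0)
    {s : ℝ} (hs : |s| ≤ 1) :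
    ∫ x, Real.exp (s * ψ x) ∂μ ≤ Real.exp ((3/4) * s^2) := by
  have hpt : ∀ x, Real.exp (s * ψ x) ≤ 1 + s * ψ x + (3/4) * s^2 := by
    intro x
    have h1 : |s * ψ x| ≤ 1 := by
      rw [abs_mul]
      have := hb x
      have := abs_nonneg s
      nlinarith [abs_nonneg (ψ x)]
    have h2 := aux_exp_le h1
    have h3 : (s * ψ x)^2 ≤ s^2 := by
      have hψ2 : ψ x ^ 2 ≤ 1 := by nlinarith [sq_abs (ψ x), abs_nonneg (ψ x), hb x]
      have : (s * ψ x)^2 = s^2 * ψ x ^2 := by ring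
      nlinarith [sq_nonneg s]
    nlinarith
  have hint1 : Integrable (fun x => Real.exp (s * ψ x)) μ :=
    aux_integrable_of_bound μ ((measurable_exp).comp (hψ.const_mul s)) (Real.exp 1)
      (fun x => by
        rw [abs_of_pos (Real.exp_pos _)]
        apply Real.exp_le_exp.2
        calc s * ψ x ≤ |s * ψ x| := le_abs_self _
          _ ≤ 1 := by
            rw [abs_mul]
            have := hb x
            nlinarith [abs_nonneg s, abs_nonneg (ψ x)])
  have hint2 : Integrable (fun x => 1 + s * ψ x + (3/4) * s^2) μ := by
    apply Integrable.add
    apply Integrable.add (integrable_const _)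
    exact ((aux_integrable_of_bound μ hψ 1 hb).const_mul s)
    exact integrable_const _
  calc ∫ x, Real.exp (s * ψ x) ∂μ ≤ ∫ x, (1 + s * ψ x + (3/4) * s^2) ∂μ :=
        integral_mono hint1 hint2 hpt
    _ = 1 + (3/4) * s^2 := by
        have hint3 : Integrable (fun x => s * ψ x) μ :=
          (aux_integrable_of_bound μ hψ 1 hb).const_mul s
        have : (fun x => 1 + s * ψ x + (3/4) * s^2)
            = fun x => (1 + (3/4) * s^2) + s * ψ x := by funext x; ring
        rw [this, integral_add (integrable_const _) hint3, integral_const,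
          integral_const_mul, h0]
        simp
    _ ≤ Real.exp ((3/4) * s^2) := by
        have := Real.add_one_le_exp ((3/4) * s^2)
        linarith

lemma aux_mgf_pi (μ : Measure α) [IsProbabilityMeasure μ] {ψ : α → ℝ}
    (hψ : Measurable ψ) (hb : ∀ x, |ψ x| ≤ 1) {m : ℕ} (s : ℝ) :
    ∫ x : Fin m → α, Real.exp (s * ∑ i, ψ (x i)) ∂(Measure.pi fun _ : Fin m => μ)
      = (∫ x, Real.exp (s * ψ x) ∂μ) ^ m := by
  letI : MeasureSpace α := ⟨μ⟩
  have hvol : (volume : Measure (Fin m → α)) = Measure.pi fun _ : Fin m => μ := rfl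
  have heq : ∀ x : Fin m → α, Real.exp (s * ∑ i, ψ (x i))
      = ∏ i : Fin m, Real.exp (s * ψ (x i)) := by
    intro x
    rw [Finset.mul_sum, Real.exp_sum]
  rw [← hvol]
  simp_rw [heq]
  have := MeasureTheory.integral_fintype_prod_eq_pow (E := α) (ι := Fin m)
    (fun y => Real.exp (s * ψ y)) (μ := μ)
  rw [hvol, this, Fintype.card_fin]

lemma aux_tail_one (μ : Measure α) [IsProbabilityMeasure μ] {ψ : α → ℝ}
    (hψ : Measurable ψ) (hb : ∀ x, |ψ x| ≤ 1) (h0 : ∫ x, ψ x ∂μ = 0)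
    {m : ℕ} {t : ℝ} (ht : 0 < t) (ht1 : t ≤ 1) :
    (Measure.pi fun _ : Fin m => μ) {x | t * m ≤ ∑ i, ψ (x i)}
      ≤ ENNReal.ofReal (Real.exp (-(m * t^2)/3)) := by
  set s : ℝ := 2*t/3 with hs_def
  have hs0 : 0 ≤ s := by positivity
  have hs1 : |s| ≤ 1 := by rw [abs_of_nonneg hs0]; simp only [hs_def]; linarith
  set P := Measure.pi fun _ : Fin m => μ with hP
  haveI : IsProbabilityMeasure P := by rw [hP]; infer_instance
  set W : (Fin m → α) → ℝ := fun x => ∑ i, ψ (x i) with hW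
  have hWmeas : Measurable W :=
    Finset.measurable_sum _ (fun i _ => hψ.comp (measurable_pi_apply i))
  have hWbd : ∀ x, |W x| ≤ m := by
    intro x
    calc |W x| ≤ ∑ i, |ψ (x i)| := Finset.abs_sum_le_sum_abs _ _
      _ ≤ ∑ _i : Fin m, (1:ℝ) := Finset.sum_le_sum fun i _ => hb _
      _ = m := by simp
  have hint : Integrable (fun x => Real.exp (s * W x)) P := by
    apply aux_integrable_of_bound P (measurable_exp.comp (hWmeas.const_mul s)) (Real.exp m)
    intro x
    simp only [Function.comp_apply]
    rw [abs_of_pos (Real.exp_pos _)]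
    apply Real.exp_le_exp.2
    calc s * W x ≤ |s * W x| := le_abs_self _
      _ = |s| * |W x| := abs_mul _ _
      _ ≤ 1 * m := by
          apply mul_le_mul hs1 (hWbd x) (abs_nonneg _) zero_le_one
      _ = m := one_mul _
  have hmarkov := ProbabilityTheory.measure_ge_le_exp_mul_mgf (X := W) (μ := P)
    (t := s) (t * m) hs0 hint
  have hmgf : mgf W P s ≤ Real.exp ((3/4) * s^2 * m) := by
    have : mgf W P s = (∫ x, Real.exp (s * ψ x) ∂μ) ^ m := by
      rw [ProbabilityTheory.mgf]
      exact aux_mgf_pi μ hψ hb s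
    rw [this]
    calc (∫ x, Real.exp (s * ψ x) ∂μ) ^ m ≤ (Real.exp ((3/4) * s^2)) ^ m := by
          apply pow_le_pow_left₀ _ (aux_mgf_single μ hψ hb h0 hs1)
          exact integral_nonneg fun x => (Real.exp_pos _).le
      _ = Real.exp ((3/4) * s^2 * m) := by
          rw [← Real.exp_nat_mul]; ring_nf
  have hexp : Real.exp (-s * (t * m)) * Real.exp ((3/4) * s^2 * m)
      = Real.exp (-(m * t^2)/3) := by
    rw [← Real.exp_add]
    congr 1
    simp only [hs_def]
    ring
  have hle : (P {x | t * m ≤ W x}).toReal ≤ Real.exp (-(m * t^2)/3) := by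
    calc (P {x | t * m ≤ W x}).toReal ≤ Real.exp (-s * (t * m)) * mgf W P s := hmarkov
      _ ≤ Real.exp (-s * (t * m)) * Real.exp ((3/4) * s^2 * m) := by
          apply mul_le_mul_of_nonneg_left hmgf (Real.exp_pos _).le
      _ = Real.exp (-(m * t^2)/3) := hexp
  exact (ENNReal.le_ofReal_iff_toReal_le (measure_ne_top P _) (Real.exp_pos _).le).2 hle

lemma aux_tail_two (μ : Measure α) [IsProbabilityMeasure μ] {ψ : α → ℝ}
    (hψ : Measurable ψ) (hb : ∀ x, |ψ x| ≤ 1) (h0 : ∫ x, ψ x ∂μ = 0)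
    {m : ℕ} {t : ℝ} (ht : 0 < t) :
    (Measure.pi fun _ : Fin m => μ) {x | t * m < |∑ i, ψ (x i)|}
      ≤ ENNReal.ofReal (2 * Real.exp (-(m * t^2)/3)) := by
  set P := Measure.pi fun _ : Fin m => μ with hP
  by_cases ht1 : t ≤ 1
  · have hsub : {x : Fin m → α | t * m < |∑ i, ψ (x i)|}
        ⊆ {x | t * m ≤ ∑ i, ψ (x i)} ∪ {x | t * m ≤ ∑ i, (-ψ) (x i)} := by
      intro x hx
      simp only [Set.mem_setOf_eq] at hx
      rcases abs_cases (∑ i, ψ (x i)) with ⟨he, _⟩ | ⟨he, _⟩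
      · left; simp only [Set.mem_setOf_eq]; linarith [hx, he.symm.le]
      · right
        simp only [Set.mem_setOf_eq, Pi.neg_apply, Finset.sum_neg_distrib]
        linarith [hx, he.symm.le]
    calc P _ ≤ P ({x | t * m ≤ ∑ i, ψ (x i)} ∪ {x | t * m ≤ ∑ i, (-ψ) (x i)}) :=
          measure_mono hsub
      _ ≤ P {x | t * m ≤ ∑ i, ψ (x i)} + P {x | t * m ≤ ∑ i, (-ψ) (x i)} :=
          measure_union_le _ _
      _ ≤ ENNReal.ofReal (Real.exp (-(m * t^2)/3)) + ENNReal.ofReal (Real.exp (-(m * t^2)/3)) := by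
          apply add_le_add
          · exact aux_tail_one μ hψ hb h0 ht ht1
          · apply aux_tail_one μ hψ.neg (fun x => by simpa using hb x)
              (by simp [Pi.neg_apply, integral_neg, h0]) ht ht1
      _ = ENNReal.ofReal (2 * Real.exp (-(m * t^2)/3)) := by
          rw [← ENNReal.ofReal_add (Real.exp_pos _).le (Real.exp_pos _).le]
          congr 1; ring
  · have hempty : {x : Fin m → α | t * m < |∑ i, ψ (x i)|} = ∅ := by
      ext x
      simp only [Set.mem_setOf_eq, Set.mem_empty_iff_false, iff_false, not_lt]
      calc |∑ i, ψ (x i)| ≤ ∑ i, |ψ (x i)| := Finset.abs_sum_le_sum_abs _ _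
        _ ≤ ∑ _i : Fin m, (1:ℝ) := Finset.sum_le_sum fun i _ => hb _
        _ = m := by simp
        _ ≤ t * m := by nlinarith [Nat.cast_nonneg (α := ℝ) m, not_le.1 ht1]
    rw [hempty]
    simp

lemma aux_measurableSet_eq_one {g : α → ℝ} (hg : Measurable g) :
    MeasurableSet {x | g x = 1} :=
  hg (measurableSet_singleton 1)

lemma aux_empMeasure_toReal {m : ℕ} (hm : 0 < m) (xs : Fin m → α) {A : Set α}
    (hA : MeasurableSet A) :
    ((empMeasure xs) A).toReal = (∑ i, A.indicator (1 : α → ℝ) (xs i)) / m := by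
  rw [empMeasure, Measure.smul_apply, Measure.finset_sum_apply]
  simp_rw [Measure.dirac_apply' _ hA]
  rw [smul_eq_mul, ENNReal.toReal_mul, ENNReal.toReal_inv, ENNReal.toReal_natCast,
    ENNReal.toReal_sum (fun i _ => by
      by_cases h : xs i ∈ A <;> simp [Set.indicator_apply, h])]
  have heq : ∀ i : Fin m, ((A.indicator (1 : α → ℝ≥0∞) (xs i)).toReal)
      = A.indicator (1 : α → ℝ) (xs i) := by
    intro i; by_cases h : xs i ∈ A <;> simp [Set.indicator_apply, h]
  simp_rw [heq]
  rw [inv_mul_eq_div]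

lemma aux_empMeasure_le_one {m : ℕ} (hm : 0 < m) (xs : Fin m → α) {A : Set α}
    (hA : MeasurableSet A) : ((empMeasure xs) A).toReal ≤ 1 := by
  rw [aux_empMeasure_toReal hm xs hA]
  have hm' : (0:ℝ) < m := by exact_mod_cast hm
  rw [div_le_one hm']
  calc (∑ i, A.indicator (1 : α → ℝ) (xs i)) ≤ ∑ _i : Fin m, (1:ℝ) :=
        Finset.sum_le_sum fun i _ => by
          by_cases h : xs i ∈ A <;> simp [Set.indicator_apply, h]
    _ = m := by simp

lemma aux_errE_eq (μ : Measure α) [IsProbabilityMeasure μ] {h h' : α → ℝ}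
    (hb : IsBinary h) (hb' : IsBinary h') (hmh : Measurable h) (hmh' : Measurable h') :
    ∫ x, |h x - h' x| ∂μ = (μ {x | |h x - h' x| = 1}).toReal := by
  have hset : MeasurableSet {x | |h x - h' x| = 1} :=
    aux_measurableSet_eq_one ((hmh.sub hmh').abs)
  have hind : (fun x => |h x - h' x|) = Set.indicator {x | |h x - h' x| = 1} 1 := by
    funext x
    by_cases hx : |h x - h' x| = 1
    · simp only [Set.indicator_apply, Set.mem_setOf_eq, hx, if_true, Pi.one_apply]
    · have h0 : |h x - h' x| = 0 := by
        rcases hb x with h1 | h1 <;> rcases hb' x with h2 | h2 <;>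
          rw [h1, h2] at hx ⊢ <;> norm_num at *
      simp [Set.indicator_apply, h0]
  rw [hind, integral_indicator_one hset]
  rfl

end AuxConc

/-- Single-source generalization bound of Blitzer et al. (Theorem 1 of the paper):
with probability at least `1 - δ` over the draw of the two unlabeled samples,
`ε_T(h) ≤ ε_S(h) + (1/2) d̂_{HΔH}(U_S, U_T) + 4 √((2 d log(2m) + log(4/δ))/m) + λ`
for every `h ∈ H`. -/
theorem single_source_generalization_bound [MeasurableSpace X] {d m : ℕ} (hm : 0 < m)
    (DS DT : Measure X) [IsProbabilityMeasure DS] [IsProbabilityMeasure DT]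
    (fS fT : X → ℝ) (hfS : Measurable fS) (hfT : Measurable fT)
    (hfSb : ∀ x, fS x ∈ Set.Icc (0:ℝ) 1) (hfTb : ∀ x, fT x ∈ Set.Icc (0:ℝ) 1)
    (H : Set (X → ℝ)) (hbin : ∀ h ∈ H, IsBinary h) (hmeas : ∀ h ∈ H, Measurable h)
    (hVC : VCDimEq (supports H) d)
    (hstar : X → ℝ) (hstarH : hstar ∈ H)
    (hstarOpt : ∀ h ∈ H,
      errE DS hstar fS + errE DT hstar fT ≤ errE DS h fS + errE DT h fT)
    (lam : ℝ) (hlam : lam = errE DS hstar fS + errE DT hstar fT)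
    (δ : ℝ) (hδ : 0 < δ) (hδ1 : δ < 1) :
    ENNReal.ofReal (1 - δ) ≤
      ((Measure.pi fun _ : Fin m => DS).prod (Measure.pi fun _ : Fin m => DT))
        {ω : (Fin m → X) × (Fin m → X) | ∀ h ∈ H,
          errE DT h fT
            ≤ errE DS h fS
              + (1 / 2) * dHdiv (symmDiffClass H) (empMeasure ω.1) (empMeasure ω.2)
              + 4 * Real.sqrt ((2 * d * Real.log (2 * m) + Real.log (4 / δ)) / m)
              + lam} := by
  classical
  have hm' : (0:ℝ) < m := by exact_mod_cast hm
  have hm1 : (1:ℝ) ≤ m := by exact_mod_cast hm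
  have hlog2m : (0:ℝ) ≤ Real.log (2 * m) := Real.log_nonneg (by linarith)
  have hlogδ : (0:ℝ) < Real.log (4 / δ) := Real.log_pos (by rw [lt_div_iff₀ hδ]; linarith)
  set L : ℝ := 2 * d * Real.log (2 * m) + Real.log (4 / δ) with hL_def
  have hdL : (0:ℝ) ≤ 2 * d * Real.log (2 * m) := by positivity
  have hL : 0 < L := by rw [hL_def]; linarith
  set S : ℝ := L / m with hS_def
  have hS : 0 < S := div_pos hL hm'
  set rt : ℝ := Real.sqrt S with hrt_def
  have hrt : 0 < rt := Real.sqrt_pos.2 hS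
  have hrt2 : rt ^ 2 = S := Real.sq_sqrt hS.le
  set t : ℝ := (7/4) * rt with ht_def
  have ht : 0 < t := by positivity
  -- the true-divergence value set
  set V : Set ℝ := {r | ∃ g ∈ symmDiffClass H,
      r = |(DS {x | g x = 1}).toReal - (DT {x | g x = 1}).toReal|} with hV_def
  have htoReal_le_one : ∀ (μ : Measure X) [IsProbabilityMeasure μ] (s : Set X),
      (μ s).toReal ≤ 1 := by
    intro μ _ s
    have h1 : μ s ≤ 1 := prob_le_one
    have := ENNReal.toReal_mono ENNReal.one_ne_top h1
    simpa using this
  have hVne : V.Nonempty := by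
    refine ⟨_, ⟨fun x => |hstar x - hstar x|, ⟨hstar, hstarH, hstar, hstarH, rfl⟩, rfl⟩⟩
  have hVbdd : BddAbove V := by
    refine ⟨2, ?_⟩
    rintro r ⟨g, hg, rfl⟩
    have h1 := htoReal_le_one DS {x | g x = 1}
    have h2 := htoReal_le_one DT {x | g x = 1}
    have h3 := ENNReal.toReal_nonneg (a := DS {x | g x = 1})
    have h4 := ENNReal.toReal_nonneg (a := DT {x | g x = 1})
    rw [abs_le]; constructor <;> linarith
  obtain ⟨r₀, hr₀V, hr₀gt⟩ :=
    exists_lt_of_lt_csSup hVne (show sSup V - rt/4 < sSup V by linarith)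
  obtain ⟨g₀, hg₀cls, hr₀eq⟩ := hr₀V
  have hg₀meas : Measurable g₀ := by
    obtain ⟨h₁, h₁H, h₂, h₂H, hg₀eq⟩ := hg₀cls
    rw [hg₀eq]; exact ((hmeas _ h₁H).sub (hmeas _ h₂H)).abs
  set A₀ : Set X := {x | g₀ x = 1} with hA₀_def
  have hA₀ : MeasurableSet A₀ := aux_measurableSet_eq_one hg₀meas
  set p₀ : ℝ := (DS A₀).toReal with hp₀_def
  set q₀ : ℝ := (DT A₀).toReal with hq₀_def
  have hp₀1 : p₀ ≤ 1 := htoReal_le_one DS A₀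
  have hq₀1 : q₀ ≤ 1 := htoReal_le_one DT A₀
  have hp₀0 : 0 ≤ p₀ := ENNReal.toReal_nonneg
  have hq₀0 : 0 ≤ q₀ := ENNReal.toReal_nonneg
  set ψS : X → ℝ := fun y => A₀.indicator (1 : X → ℝ) y - p₀ with hψS_def
  set ψT : X → ℝ := fun y => A₀.indicator (1 : X → ℝ) y - q₀ with hψT_def
  have hindmeas : Measurable (A₀.indicator (1 : X → ℝ)) := measurable_one.indicator hA₀
  have hindint : ∀ (μ : Measure X) [IsProbabilityMeasure μ],
      Integrable (A₀.indicator (1 : X → ℝ)) μ := by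
    intro μ _
    exact aux_integrable_of_bound μ hindmeas 1 (fun x => by
      by_cases hx : x ∈ A₀ <;> simp [Set.indicator_apply, hx])
  have hψSmeas : Measurable ψS := hindmeas.sub measurable_const
  have hψTmeas : Measurable ψT := hindmeas.sub measurable_const
  have hψSb : ∀ y, |ψS y| ≤ 1 := by
    intro y
    rw [hψS_def]
    by_cases hy : y ∈ A₀ <;>
      simp only [Set.indicator_apply, hy, if_true, if_false, Pi.one_apply] <;>
      rw [abs_le] <;> constructor <;> linarith
  have hψTb : ∀ y, |ψT y| ≤ 1 := by
    intro y
    rw [hψT_def]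
    by_cases hy : y ∈ A₀ <;>
      simp only [Set.indicator_apply, hy, if_true, if_false, Pi.one_apply] <;>
      rw [abs_le] <;> constructor <;> linarith
  have hψS0 : ∫ y, ψS y ∂DS = 0 := by
    rw [hψS_def]
    rw [integral_sub (hindint DS) (integrable_const _), integral_indicator_one hA₀,
      integral_const]
    simp [hp₀_def, Measure.real]
  have hψT0 : ∫ y, ψT y ∂DT = 0 := by
    rw [hψT_def]
    rw [integral_sub (hindint DT) (integrable_const _), integral_indicator_one hA₀,
      integral_const]
    simp [hq₀_def, Measure.real]
  -- good events
  set goodS : Set (Fin m → X) := {x | |∑ i, ψS (x i)| ≤ t * m} with hgoodS_def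
  set goodT : Set (Fin m → X) := {x | |∑ i, ψT (x i)| ≤ t * m} with hgoodT_def
  have hsummeasS : Measurable (fun x : Fin m → X => ∑ i, ψS (x i)) :=
    Finset.measurable_sum _ (fun i _ => hψSmeas.comp (measurable_pi_apply i))
  have hsummeasT : Measurable (fun x : Fin m → X => ∑ i, ψT (x i)) :=
    Finset.measurable_sum _ (fun i _ => hψTmeas.comp (measurable_pi_apply i))
  have hgoodSm : MeasurableSet goodS := measurableSet_le hsummeasS.abs measurable_const
  have hgoodTm : MeasurableSet goodT := measurableSet_le hsummeasT.abs measurable_const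
  set PS := Measure.pi fun _ : Fin m => DS with hPS_def
  set PT := Measure.pi fun _ : Fin m => DT with hPT_def
  haveI : IsProbabilityMeasure PS := by rw [hPS_def]; infer_instance
  haveI : IsProbabilityMeasure PT := by rw [hPT_def]; infer_instance
  -- tail bound numerics
  have hexp_le : 2 * Real.exp (-(m * t^2)/3) ≤ δ/2 := by
    have hmt : m * t ^ 2 = (49/16) * L := by
      have : t ^ 2 = (49/16) * S := by rw [ht_def]; rw [mul_pow]; rw [hrt2]; ring
      rw [this, hS_def]
      field_simp
    have h1 : -(m * t^2)/3 ≤ -L := by rw [hmt]; linarith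
    have h2 : Real.exp (-(m * t^2)/3) ≤ Real.exp (-L) := Real.exp_le_exp.2 h1
    have h3 : Real.exp (-L) ≤ Real.exp (-Real.log (4/δ)) := Real.exp_le_exp.2 (by linarith)
    have h4 : Real.exp (-Real.log (4/δ)) = δ/4 := by
      rw [Real.exp_neg, Real.exp_log (by positivity : (0:ℝ) < 4/δ)]
      rw [inv_div]
    linarith
  have htailS : PS goodSᶜ ≤ ENNReal.ofReal (δ/2) := by
    have hcompl : goodSᶜ = {x : Fin m → X | t * m < |∑ i, ψS (x i)|} := by
      ext x; simp [hgoodS_def, not_le]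
    rw [hcompl]
    refine le_trans (aux_tail_two DS hψSmeas hψSb hψS0 ht) ?_
    exact ENNReal.ofReal_le_ofReal hexp_le
  have htailT : PT goodTᶜ ≤ ENNReal.ofReal (δ/2) := by
    have hcompl : goodTᶜ = {x : Fin m → X | t * m < |∑ i, ψT (x i)|} := by
      ext x; simp [hgoodT_def, not_le]
    rw [hcompl]
    refine le_trans (aux_tail_two DT hψTmeas hψTb hψT0 ht) ?_
    exact ENNReal.ofReal_le_ofReal hexp_le
  -- the good event implies the bound for all h
  have hsubset : goodS ×ˢ goodT ⊆
      {ω : (Fin m → X) × (Fin m → X) | ∀ h ∈ H,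
        errE DT h fT
          ≤ errE DS h fS
            + (1 / 2) * dHdiv (symmDiffClass H) (empMeasure ω.1) (empMeasure ω.2)
            + 4 * Real.sqrt ((2 * d * Real.log (2 * m) + Real.log (4 / δ)) / m)
            + lam} := by
    rintro ⟨xs, ys⟩ ⟨hxs, hys⟩ h hH
    simp only [Set.mem_setOf_eq] at hxs hys ⊢
    -- empirical quantities
    set eS : ℝ := ((empMeasure xs) A₀).toReal with heS_def
    set eT : ℝ := ((empMeasure ys) A₀).toReal with heT_def
    have hempS : eS - p₀ = (∑ i, ψS (xs i)) / m := by
      rw [heS_def, aux_empMeasure_toReal hm xs hA₀]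
      rw [hψS_def]
      rw [Finset.sum_sub_distrib, Finset.sum_const, Finset.card_univ, Fintype.card_fin,
        nsmul_eq_mul]
      field_simp
    have hempT : eT - q₀ = (∑ i, ψT (ys i)) / m := by
      rw [heT_def, aux_empMeasure_toReal hm ys hA₀]
      rw [hψT_def]
      rw [Finset.sum_sub_distrib, Finset.sum_const, Finset.card_univ, Fintype.card_fin,
        nsmul_eq_mul]
      field_simp
    have hdevS : |eS - p₀| ≤ t := by
      rw [hempS, abs_div, abs_of_pos hm']
      rw [div_le_iff₀ hm']
      exact hxs
    have hdevT : |eT - q₀| ≤ t := by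
      rw [hempT, abs_div, abs_of_pos hm']
      rw [div_le_iff₀ hm']
      exact hys
    -- empirical sup
    set Vemp : Set ℝ := {r | ∃ g ∈ symmDiffClass H,
        r = |((empMeasure xs) {x | g x = 1}).toReal - ((empMeasure ys) {x | g x = 1}).toReal|}
      with hVemp_def
    have hVempbdd : BddAbove Vemp := by
      refine ⟨2, ?_⟩
      rintro r ⟨g, hg, rfl⟩
      have hgmeas : Measurable g := by
        obtain ⟨h₁, h₁H, h₂, h₂H, hgeq⟩ := hg
        rw [hgeq]; exact ((hmeas _ h₁H).sub (hmeas _ h₂H)).abs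
      have hAg : MeasurableSet {x | g x = 1} := aux_measurableSet_eq_one hgmeas
      have h1 := aux_empMeasure_le_one hm xs hAg
      have h2 := aux_empMeasure_le_one hm ys hAg
      have h3 := ENNReal.toReal_nonneg (a := (empMeasure xs) {x | g x = 1})
      have h4 := ENNReal.toReal_nonneg (a := (empMeasure ys) {x | g x = 1})
      rw [abs_le]; constructor <;> linarith
    have hWdH : (1 / 2) * dHdiv (symmDiffClass H) (empMeasure xs) (empMeasure ys)
        = sSup Vemp := by
      rw [dHdiv, hVemp_def]; ring
    have hF₀W : |eS - eT| ≤ sSup Vemp := by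
      apply le_csSup hVempbdd
      exact ⟨g₀, hg₀cls, rfl⟩
    -- deterministic risk chain
    have hhb := hbin h hH
    have hsb := hbin hstar hstarH
    have hhm := hmeas h hH
    have hsm := hmeas hstar hstarH
    have habs1 : ∀ x, |h x| ≤ 1 := fun x => by
      rcases hhb x with e | e <;> rw [e] <;> norm_num
    have habs2 : ∀ x, |hstar x| ≤ 1 := fun x => by
      rcases hsb x with e | e <;> rw [e] <;> norm_num
    have habsT : ∀ x, |fT x| ≤ 1 := fun x =>
      abs_le.2 ⟨by linarith [(hfTb x).1], (hfTb x).2⟩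
    have habsS : ∀ x, |fS x| ≤ 1 := fun x =>
      abs_le.2 ⟨by linarith [(hfSb x).1], (hfSb x).2⟩
    have hint_bound : ∀ (g g' : X → ℝ), (∀ x, |g x| ≤ 1) → (∀ x, |g' x| ≤ 1) →
        ∀ x, |(fun y => |g y - g' y|) x| ≤ 2 := by
      intro g g' hg hg' x
      rw [abs_abs]
      calc |g x - g' x| ≤ |g x| + |g' x| := abs_sub _ _
        _ ≤ 2 := by linarith [hg x, hg' x]
    have hint1 : Integrable (fun x => |h x - fT x|) DT :=
      aux_integrable_of_bound DT (hhm.sub hfT).abs 2 (hint_bound _ _ habs1 habsT)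
    have hint2 : Integrable (fun x => |h x - hstar x|) DT :=
      aux_integrable_of_bound DT (hhm.sub hsm).abs 2 (hint_bound _ _ habs1 habs2)
    have hint3 : Integrable (fun x => |hstar x - fT x|) DT :=
      aux_integrable_of_bound DT (hsm.sub hfT).abs 2 (hint_bound _ _ habs2 habsT)
    have hint4 : Integrable (fun x => |h x - fS x|) DS :=
      aux_integrable_of_bound DS (hhm.sub hfS).abs 2 (hint_bound _ _ habs1 habsS)
    have hint5 : Integrable (fun x => |h x - hstar x|) DS :=
      aux_integrable_of_bound DS (hhm.sub hsm).abs 2 (hint_bound _ _ habs1 habs2)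
    have hint6 : Integrable (fun x => |fS x - hstar x|) DS :=
      aux_integrable_of_bound DS (hfS.sub hsm).abs 2 (hint_bound _ _ habsS habs2)
    set Ah : Set X := {x | |h x - hstar x| = 1} with hAh_def
    have step1 : errE DT h fT ≤ (DT Ah).toReal + errE DT hstar fT := by
      have tri : ∀ x, |h x - fT x| ≤ |h x - hstar x| + |hstar x - fT x| := fun x =>
        abs_sub_le _ _ _
      have : errE DT h fT ≤ ∫ x, (|h x - hstar x| + |hstar x - fT x|) ∂DT :=
        integral_mono hint1 (hint2.add hint3) tri
      rw [integral_add hint2 hint3] at this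
      rw [aux_errE_eq DT hhb hsb hhm hsm] at this
      exact this
    have step2 : (DT Ah).toReal ≤ (DS Ah).toReal
        + |(DS Ah).toReal - (DT Ah).toReal| := by
      have : (DT Ah).toReal - (DS Ah).toReal ≤ |(DS Ah).toReal - (DT Ah).toReal| := by
        rw [abs_sub_comm]; exact le_abs_self _
      linarith
    have step3 : (DS Ah).toReal ≤ errE DS h fS + errE DS hstar fS := by
      have tri : ∀ x, |h x - hstar x| ≤ |h x - fS x| + |fS x - hstar x| := fun x =>
        abs_sub_le _ _ _
      have h1 : ∫ x, |h x - hstar x| ∂DS ≤ ∫ x, (|h x - fS x| + |fS x - hstar x|) ∂DS :=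
        integral_mono hint5 (hint4.add hint6) tri
      rw [integral_add hint4 hint6] at h1
      rw [aux_errE_eq DS hhb hsb hhm hsm] at h1
      have h2 : ∫ x, |fS x - hstar x| ∂DS = errE DS hstar fS := by
        rw [errE]
        congr 1
        funext x
        rw [abs_sub_comm]
      rw [h2] at h1
      exact h1
    -- the divergence chain
    have step4 : |(DS Ah).toReal - (DT Ah).toReal| ≤ sSup V := by
      apply le_csSup hVbdd
      exact ⟨fun x => |h x - hstar x|, ⟨h, hH, hstar, hstarH, rfl⟩, rfl⟩
    have step6 : r₀ ≤ |eS - eT| + 2 * t := by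
      rw [hr₀eq]
      have t1 : |p₀ - q₀| ≤ |p₀ - eS| + |eS - q₀| := abs_sub_le _ _ _
      have t2 : |eS - q₀| ≤ |eS - eT| + |eT - q₀| := abs_sub_le _ _ _
      have t3 : |p₀ - eS| = |eS - p₀| := abs_sub_comm _ _
      have t4 : |eT - q₀| ≤ t := hdevT
      linarith [hdevS]
    have hfinal : errE DT h fT ≤ errE DS h fS + sSup Vemp + 4 * rt + lam := by
      have c1 : |(DS Ah).toReal - (DT Ah).toReal| ≤ sSup Vemp + 2 * t + rt/4 := by
        linarith [step4, hr₀gt, step6, hF₀W]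
      have c2 : sSup Vemp + 2 * t + rt/4 ≤ sSup Vemp + 4 * rt := by
        rw [ht_def]; linarith
      rw [hlam]
      linarith
    rw [hWdH]
    calc errE DT h fT ≤ errE DS h fS + sSup Vemp + 4 * rt + lam := hfinal
      _ = errE DS h fS + sSup Vemp
          + 4 * Real.sqrt ((2 * d * Real.log (2 * m) + Real.log (4 / δ)) / m) + lam := by
          rw [hrt_def, hS_def, hL_def]
    -- done subset
  -- probability assembly
  haveI hprodinst : IsProbabilityMeasure (PS.prod PT) := inferInstance
  have hGm : MeasurableSet (goodS ×ˢ goodT) := hgoodSm.prod hgoodTm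
  have hcompl_sub : (goodS ×ˢ goodT)ᶜ ⊆ (goodSᶜ ×ˢ Set.univ) ∪ (Set.univ ×ˢ goodTᶜ) := by
    rintro ⟨xs, ys⟩ hω
    simp only [Set.mem_compl_iff, Set.mem_prod, not_and] at hω
    by_cases hx : xs ∈ goodS
    · right; exact ⟨Set.mem_univ _, hω hx⟩
    · left; exact ⟨hx, Set.mem_univ _⟩
  have hPGc : (PS.prod PT) ((goodS ×ˢ goodT)ᶜ) ≤ ENNReal.ofReal δ := by
    calc (PS.prod PT) ((goodS ×ˢ goodT)ᶜ)
        ≤ (PS.prod PT) ((goodSᶜ ×ˢ Set.univ) ∪ (Set.univ ×ˢ goodTᶜ)) :=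
          measure_mono hcompl_sub
      _ ≤ (PS.prod PT) (goodSᶜ ×ˢ Set.univ) + (PS.prod PT) (Set.univ ×ˢ goodTᶜ) :=
          measure_union_le _ _
      _ = PS goodSᶜ * PT Set.univ + PS Set.univ * PT goodTᶜ := by
          rw [Measure.prod_prod, Measure.prod_prod]
      _ = PS goodSᶜ + PT goodTᶜ := by simp
      _ ≤ ENNReal.ofReal (δ/2) + ENNReal.ofReal (δ/2) := add_le_add htailS htailT
      _ = ENNReal.ofReal δ := by
          rw [← ENNReal.ofReal_add (by linarith) (by linarith)]
          norm_num
  have hPG : ENNReal.ofReal (1 - δ) ≤ (PS.prod PT) (goodS ×ˢ goodT) := by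
    have h1 : (PS.prod PT) (goodS ×ˢ goodT) + (PS.prod PT) ((goodS ×ˢ goodT)ᶜ) = 1 := by
      rw [measure_add_measure_compl hGm]
      exact measure_univ
    have h2 : ENNReal.ofReal (1 - δ) = 1 - ENNReal.ofReal δ := by
      rw [ENNReal.ofReal_sub _ hδ.le, ENNReal.ofReal_one]
    rw [h2]
    rw [tsub_le_iff_right]
    calc (1:ℝ≥0∞) = (PS.prod PT) (goodS ×ˢ goodT) + (PS.prod PT) ((goodS ×ˢ goodT)ᶜ) := h1.symm
      _ ≤ (PS.prod PT) (goodS ×ˢ goodT) + ENNReal.ofReal δ := add_le_add le_rfl hPGc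
  exact le_trans hPG (measure_mono hsubset)
end
end
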